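/- arXiv:1912.10385 — 5 statements merged into one kernel-verified Lean document; each statement's English description precedes it below -/
import Mathlib

section
/- Let $M$ be a $k \times n$ matrix over a commutative ring, with $k \ge 1$. For column index sequences $a_1, \dots, a_{k+1}$ and $b_1, \dots, b_{k-1}$ in $\{1,\dots,n\}$, the Grassmann–Plücker relation holds: $\sum_{i=1}^{k+1} (-1)^i \det(M_{a_1, \dots, \widehat{a_i}, \dots, a_{k+1}}) \cdot \det(M_{a_i, b_1, \dots, b_{k-1}}) = 0$, where $M_{c_1,\dots,c_k}$ denotes the $k \times k$ matrix whose $j$-th column is column $c_j$ of $M$ and $\widehat{a_i}$ denotes omission of $a_i$. -/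
/-- The Grassmann–Plücker relation for maximal minors of a `k × n` matrix (`k = m+1 ≥ 1`)
over a commutative ring: for column sequences `a : Fin (k+1) → Fin n` and
`b : Fin (k-1) → Fin n`,
`∑ i, (-1)^(i+1) det(columns a with aᵢ omitted) · det(columns aᵢ, b) = 0`. -/
theorem stmt_1 {R : Type*} [CommRing R] (m n : ℕ)
    (M : Matrix (Fin (m + 1)) (Fin n) R)
    (a : Fin (m + 2) → Fin n) (b : Fin m → Fin n) :
    ∑ i : Fin (m + 2), (-1 : R) ^ ((i : ℕ) + 1) *
        (Matrix.of fun r j : Fin (m + 1) => M r (a (i.succAbove j))).det *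
        (Matrix.of fun r j : Fin (m + 1) => M r ((Fin.cons (a i) b : Fin (m + 1) → Fin n) j)).det = 0 := by
  classical
  set f : Fin n → R := fun x =>
    (Matrix.of fun r j : Fin (m + 1) => M r ((Fin.cons x b : Fin (m + 1) → Fin n) j)).det with hf
  set c : Fin (m + 1) → R := fun r =>
    (-1 : R) ^ (r : ℕ) *
      (Matrix.of fun r' j : Fin m => M (r.succAbove r') (b j)).det with hc
  have hfc : ∀ x : Fin n, f x = ∑ r : Fin (m + 1), c r * M r x := by
    intro x
    show (Matrix.of fun r j : Fin (m + 1) => M r ((Fin.cons x b : Fin (m + 1) → Fin n) j)).det = _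
    rw [Matrix.det_succ_column_zero]
    refine Finset.sum_congr rfl fun r _ => ?_
    simp only [hc, Matrix.of_apply, Fin.cons_zero, Matrix.submatrix, Fin.cons_succ]
    ring
  -- the (m+2)×(m+2) matrix
  set N : Matrix (Fin (m + 2)) (Fin (m + 2)) R :=
    Matrix.of fun i j => Fin.cases (f (a i)) (fun r => M r (a i)) j with hNdef
  have hN : N.det = 0 := by
    rw [← Matrix.det_transpose]
    have key := Matrix.det_updateRow_sum N.transpose 0
      (Fin.cases 0 c : Fin (m + 2) → R)
    have hsum : (∑ k, (Fin.cases 0 c : Fin (m + 2) → R) k • N.transpose k)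
        = N.transpose 0 := by
      funext i
      rw [Fin.sum_univ_succ]
      simp only [Fin.cases_zero, Fin.cases_succ, zero_smul, Finset.sum_apply, Pi.smul_apply,
        smul_eq_mul, Pi.zero_apply, zero_add, Matrix.transpose_apply, hNdef, Matrix.of_apply,
        Fin.cases_zero, Fin.cases_succ]
      exact (hfc (a i)).symm
    rw [hsum, Matrix.updateRow_eq_self] at key
    simpa using key
  rw [Matrix.det_succ_column_zero] at hN
  have : ∀ i : Fin (m + 2),
      (-1 : R) ^ ((i : ℕ) + 1) *
        (Matrix.of fun r j : Fin (m + 1) => M r (a (i.succAbove j))).det *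
        (Matrix.of fun r j : Fin (m + 1) => M r ((Fin.cons (a i) b : Fin (m + 1) → Fin n) j)).det
      = -((-1 : R) ^ (i : ℕ) * N i 0 * (N.submatrix i.succAbove Fin.succ).det) := by
    intro i
    have h1 : N i 0 = f (a i) := rfl
    have h2 : (N.submatrix i.succAbove Fin.succ).det
        = (Matrix.of fun r j : Fin (m + 1) => M r (a (i.succAbove j))).det := by
      rw [← Matrix.det_transpose (N.submatrix i.succAbove Fin.succ)]
      congr 1
    rw [h1, h2, pow_succ]
    show _ * _ * f (a i) = _
    rw [hf]
    ring
  rw [Finset.sum_congr rfl fun i _ => this i, Finset.sum_neg_distrib, hN, neg_zero]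
end

section
/- Let $i_1 \le i_2 \le \cdots \le i_k$ and $j_1 \le j_2 \le \cdots \le j_k$ be sequences in $\{1,\dots,n\}$. The monomial $m = \prod_{l=1}^k x_{1, i_l} x_{2, j_l}$ can be written as a product of $k$ monomials each of the form $x_{1,i} x_{2,j}$ with $i < j$ if and only if $i_l < j_l$ for every $l = 1, \dots, k$. -/
lemma cum_count0 (k : ℕ) (f g : Fin k → ℕ) (t : ℕ)
    (F : Fin 2 × ℕ →₀ ℕ)
    (hF : F = ∑ l, (Finsupp.single ((0 : Fin 2), f l) 1 + Finsupp.single ((1 : Fin 2), g l) 1)) :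
    ∑ s ∈ Finset.range (t+1), F (0, s) = (Finset.univ.filter (fun l => f l ≤ t)).card := by
  subst hF
  have h10 : ((1:Fin 2) = 0) = False := by simp [Fin.ext_iff]
  simp only [Finsupp.finset_sum_apply, Finsupp.add_apply, Finsupp.single_apply,
    Prod.mk.injEq, true_and, h10, false_and, if_false, add_zero]
  rw [Finset.sum_comm]
  have step : ∀ l : Fin k,
      (∑ s ∈ Finset.range (t+1), if f l = s then (1:ℕ) else 0) = if f l ≤ t then 1 else 0 := by
    intro l
    rw [Finset.sum_ite_eq (Finset.range (t+1)) (f l) (fun _ => (1:ℕ))]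
    simp [Nat.lt_succ_iff]
  rw [Finset.sum_congr rfl (fun l _ => step l)]
  rw [Finset.sum_ite, Finset.sum_const, Finset.sum_const]
  simp

lemma cum_count1 (k : ℕ) (f g : Fin k → ℕ) (t : ℕ)
    (F : Fin 2 × ℕ →₀ ℕ)
    (hF : F = ∑ l, (Finsupp.single ((0 : Fin 2), f l) 1 + Finsupp.single ((1 : Fin 2), g l) 1)) :
    ∑ s ∈ Finset.range (t+1), F (1, s) = (Finset.univ.filter (fun l => g l ≤ t)).card := by
  subst hF
  have h01 : ((0:Fin 2) = 1) = False := by simp [Fin.ext_iff]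
  simp only [Finsupp.finset_sum_apply, Finsupp.add_apply, Finsupp.single_apply,
    Prod.mk.injEq, true_and, h01, false_and, if_false, zero_add]
  rw [Finset.sum_comm]
  have step : ∀ l : Fin k,
      (∑ s ∈ Finset.range (t+1), if g l = s then (1:ℕ) else 0) = if g l ≤ t then 1 else 0 := by
    intro l
    rw [Finset.sum_ite_eq (Finset.range (t+1)) (g l) (fun _ => (1:ℕ))]
    simp [Nat.lt_succ_iff]
  rw [Finset.sum_congr rfl (fun l _ => step l)]
  rw [Finset.sum_ite, Finset.sum_const, Finset.sum_const]
  simp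

/-- For weakly increasing sequences `i₁ ≤ ⋯ ≤ i_k` and `j₁ ≤ ⋯ ≤ j_k` in `{1,…,n}`, the
monomial `∏ l, x₁,(i l) · x₂,(j l)` (recorded as its exponent vector) is a product of `k`
monomials of the form `x₁,ᵢ x₂,ⱼ` with `i < j` if and only if `i l < j l` for every `l`. -/
theorem stmt_3 (n k : ℕ) (i j : Fin k → ℕ)
    (hi : Monotone i) (hj : Monotone j)
    (hin : ∀ l, 1 ≤ i l ∧ i l ≤ n) (hjn : ∀ l, 1 ≤ j l ∧ j l ≤ n) :
    (∃ c : Fin k → ℕ × ℕ, (∀ l, (c l).1 < (c l).2) ∧ (∀ l, 1 ≤ (c l).1 ∧ (c l).2 ≤ n) ∧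
      (∑ l, (Finsupp.single ((0 : Fin 2), i l) 1 + Finsupp.single ((1 : Fin 2), j l) 1)
        : Fin 2 × ℕ →₀ ℕ)
      = ∑ l, (Finsupp.single ((0 : Fin 2), (c l).1) 1
          + Finsupp.single ((1 : Fin 2), (c l).2) 1)) ↔
    ∀ l, i l < j l := by
  constructor
  · rintro ⟨c, hlt, hcn, heq⟩ l
    by_contra h
    push_neg at h  -- h : j l ≤ i l
    -- counting functions
    have countA : ∀ t, (Finset.univ.filter (fun m => i m ≤ t)).card
        = (Finset.univ.filter (fun m => (c m).1 ≤ t)).card := by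
      intro t
      rw [← cum_count0 k i j t _ rfl, ← cum_count0 k (fun m => (c m).1) (fun m => (c m).2) t _ rfl,
        heq]
    have countB : ∀ t, (Finset.univ.filter (fun m => j m ≤ t)).card
        = (Finset.univ.filter (fun m => (c m).2 ≤ t)).card := by
      intro t
      rw [← cum_count1 k i j t _ rfl, ← cum_count1 k (fun m => (c m).1) (fun m => (c m).2) t _ rfl,
        heq]
    have hjl1 : 1 ≤ j l := (hjn l).1
    -- at least l+1 elements of j's are ≤ j l
    have h1 : (l : ℕ) + 1 ≤ (Finset.univ.filter (fun m => j m ≤ j l)).card := by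
      have hsub : Finset.Iic l ⊆ Finset.univ.filter (fun m => j m ≤ j l) := by
        intro m hm
        simp only [Finset.mem_Iic] at hm
        simp only [Finset.mem_filter, Finset.mem_univ, true_and]
        exact hj hm
      calc (l : ℕ) + 1 = (Finset.Iic l).card := (Fin.card_Iic l).symm
        _ ≤ _ := Finset.card_le_card hsub
    have h2 : (Finset.univ.filter (fun m => (c m).2 ≤ j l)).card
        ≤ (Finset.univ.filter (fun m => (c m).1 ≤ j l - 1)).card := by
      apply Finset.card_le_card
      intro m hm
      simp only [Finset.mem_filter, Finset.mem_univ, true_and] at hm ⊢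
      have := hlt m
      omega
    have h3 : (Finset.univ.filter (fun m => i m ≤ j l - 1)).card ≤ (l : ℕ) := by
      have hsub : Finset.univ.filter (fun m => i m ≤ j l - 1) ⊆ Finset.Iio l := by
        intro m hm
        simp only [Finset.mem_filter, Finset.mem_univ, true_and] at hm
        simp only [Finset.mem_Iio]
        by_contra hml
        push_neg at hml
        have := hi hml
        omega
      calc _ ≤ (Finset.Iio l).card := Finset.card_le_card hsub
        _ = (l : ℕ) := Fin.card_Iio l
    have := countA (j l - 1)
    have := countB (j l)
    omega
  · intro h
    refine ⟨fun l => (i l, j l), h, fun l => ⟨(hin l).1, (hjn l).2⟩, rfl⟩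
end

section
/- Let $f \in \mathbb{C}[x_1^{\pm 1}, \dots, x_n^{\pm 1}]$, written as $f = \sum_{i \in \mathbb{Z}} C_i(x_1, \dots, x_{n-1}) x_n^i$ where each $C_i$ is a Laurent polynomial in $x_1,\dots,x_{n-1}$. Suppose $h \in \mathbb{C}[x_1^{\pm 1}, \dots, x_{n-1}^{\pm 1}]$ is such that $h^{-i}$ divides $C_i$ (in the Laurent polynomial ring in $x_1,\dots,x_{n-1}$) for every $i < 0$ with $C_i \ne 0$, so that $g := \sum_i h^i C_i x_n^i$ is again a Laurent polynomial. Then for every $k \ge 0$ the constant term of $g^k$ equals the constant term of $f^k$; that is, the classical period is invariant under this mutation. -/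
/-- Coefficient formula for a product in a Laurent polynomial ring, where the sums range
over arbitrary finite supersets of the supports. -/
lemma mul_apply_superset {R : Type*} [Semiring R] (p q : AddMonoidAlgebra R ℤ)
    (s t : Finset ℤ) (hs : p.coeff.support ⊆ s) (ht : q.coeff.support ⊆ t) (x : ℤ) :
    (p * q).coeff x = ∑ a₁ ∈ s, ∑ a₂ ∈ t, if a₁ + a₂ = x then p.coeff a₁ * q.coeff a₂ else 0 := by
  classical
  rw [AddMonoidAlgebra.coeff_mul, Finsupp.sum, Finset.sum_subset hs]
  · refine Finset.sum_congr rfl fun a₁ _ => ?_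
    rw [Finsupp.sum, Finset.sum_subset ht]
    intro a₂ _ ha₂
    rw [Finsupp.notMem_support_iff.mp ha₂, mul_zero, ite_self]
  · intro a₁ _ ha₁
    rw [Finsupp.notMem_support_iff.mp ha₁]
    simp

/-- Invariance of the classical period under a one-step mutation.  Laurent polynomials in
`x₁,…,x_n` are modelled as Laurent polynomials in `x_n` (the outer variable, exponents in
`ℤ`) with coefficients Laurent polynomials in the remaining `m = n - 1` variables.  If
`f = ∑ Cᵢ x_nⁱ`, `h` is a Laurent polynomial in `x₁,…,x_{n-1}` such that `h^{-i}` divides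
`Cᵢ` for every `i < 0`, and `g = ∑ hⁱ Cᵢ x_nⁱ` (so `g i = h^i * f i` for `i ≥ 0` and
`f i = h^{-i} * g i` for `i < 0`), then the constant terms of `g ^ N` and `f ^ N` agree
for all `N`. -/
theorem stmt_6 (m : ℕ)
    (f g : AddMonoidAlgebra (AddMonoidAlgebra ℂ (Fin m → ℤ)) ℤ)
    (h : AddMonoidAlgebra ℂ (Fin m → ℤ))
    (hpos : ∀ i : ℤ, 0 ≤ i → g.coeff i = h ^ i.toNat * f.coeff i)
    (hneg : ∀ i : ℤ, i < 0 → f.coeff i = h ^ (-i).toNat * g.coeff i) :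
    ∀ N : ℕ, ((g ^ N).coeff 0).coeff 0 = ((f ^ N).coeff 0).coeff 0 := by
  have key : ∀ N : ℕ, ∀ a : ℤ,
      (0 ≤ a → (g ^ N).coeff a = h ^ a.toNat * (f ^ N).coeff a) ∧
      (a < 0 → (f ^ N).coeff a = h ^ (-a).toNat * (g ^ N).coeff a) := by
    intro N
    induction N with
    | zero =>
      intro a
      simp only [pow_zero, AddMonoidAlgebra.one_def]
      constructor
      · intro ha
        rcases eq_or_ne a 0 with rfl | hne
        · simp
        · simp [AddMonoidAlgebra.coeff_single, Finsupp.single_apply, hne, Ne.symm hne]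
      · intro ha
        have hne : a ≠ 0 := ha.ne
        simp [AddMonoidAlgebra.coeff_single, Finsupp.single_apply, hne, Ne.symm hne]
    | succ N ih =>
      intro a
      set s : Finset ℤ := f.coeff.support ∪ g.coeff.support with hsdef
      set t : Finset ℤ := (f ^ N).coeff.support ∪ (g ^ N).coeff.support with htdef
      have hf1 : f.coeff.support ⊆ s := Finset.subset_union_left
      have hg1 : g.coeff.support ⊆ s := Finset.subset_union_right
      have hf2 : (f ^ N).coeff.support ⊆ t := Finset.subset_union_left
      have hg2 : (g ^ N).coeff.support ⊆ t := Finset.subset_union_right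
      rw [pow_succ', pow_succ']
      constructor
      · intro ha
        rw [mul_apply_superset g (g ^ N) s t hg1 hg2,
            mul_apply_superset f (f ^ N) s t hf1 hf2, Finset.mul_sum]
        refine Finset.sum_congr rfl fun a₁ _ => ?_
        rw [Finset.mul_sum]
        refine Finset.sum_congr rfl fun a₂ _ => ?_
        rw [mul_ite, mul_zero]
        split_ifs with hx
        · -- a₁ + a₂ = a, 0 ≤ a
          rcases le_or_gt 0 a₁ with h1 | h1 <;> rcases le_or_gt 0 a₂ with h2 | h2
          · rw [hpos a₁ h1, (ih a₂).1 h2]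
            have : a.toNat = a₁.toNat + a₂.toNat := by omega
            rw [this, pow_add]; ring
          · rw [hpos a₁ h1, (ih a₂).2 h2]
            have : a₁.toNat = a.toNat + (-a₂).toNat := by omega
            rw [this, pow_add]; ring
          · rw [hneg a₁ h1, (ih a₂).1 h2]
            have : a₂.toNat = a.toNat + (-a₁).toNat := by omega
            rw [this, pow_add]; ring
          · omega
        · rfl
      · intro ha
        rw [mul_apply_superset g (g ^ N) s t hg1 hg2,
            mul_apply_superset f (f ^ N) s t hf1 hf2, Finset.mul_sum]
        refine Finset.sum_congr rfl fun a₁ _ => ?_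
        rw [Finset.mul_sum]
        refine Finset.sum_congr rfl fun a₂ _ => ?_
        rw [mul_ite, mul_zero]
        split_ifs with hx
        · rcases le_or_gt 0 a₁ with h1 | h1 <;> rcases le_or_gt 0 a₂ with h2 | h2
          · omega
          · rw [hpos a₁ h1, (ih a₂).2 h2]
            have : (-a₂).toNat = (-a).toNat + a₁.toNat := by omega
            rw [this, pow_add]; ring
          · rw [hneg a₁ h1, (ih a₂).1 h2]
            have : (-a₁).toNat = (-a).toNat + a₂.toNat := by omega
            rw [this, pow_add]; ring
          · rw [hneg a₁ h1, (ih a₂).2 h2]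
            have : (-a).toNat = (-a₁).toNat + (-a₂).toNat := by omega
            rw [this, pow_add]; ring
        · rfl
  intro N
  have := (key N 0).1 le_rfl
  rw [this]
  simp
end

section
/- Let $G$ be a finite directed graph with vertex set $\{0, 1, \dots, l\}$, and to each arrow $a$ associate $D_a = e_{t(a)} - e_{s(a)} \in \mathbb{Q}^l$ with $e_0 := 0$. Let $S$ be a set of arrows and $v \ne 0$ a vertex such that $e_v$ lies in the nonnegative rational span of $\{D_a : a \in S\}$. Then $S$ contains the arrow set of a directed path from $0$ to $v$. -/
inductive Reach {A V : Type*} (s t : A → V) (S : Finset A) (z : V) : V → Prop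
  | base : Reach s t S z z
  | step {a : A} : a ∈ S → Reach s t S z (s a) → Reach s t S z (t a)

theorem reach_path {l : ℕ} {A : Type*} (s t : A → Fin (l + 1)) (S : Finset A)
    {v : Fin (l + 1)} (h : Reach s t S 0 v) (hv : v ≠ 0) :
    ∃ (n : ℕ) (p : Fin (n + 1) → A),
      s (p 0) = 0 ∧ t (p (Fin.last n)) = v ∧
      (∀ i : Fin n, t (p i.castSucc) = s (p i.succ)) ∧
      (∀ i, p i ∈ S) := by
  induction h with
  | base => exact absurd rfl hv
  | step hS hr ih =>
    rename_i a
    by_cases hs : s a = 0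
    · exact ⟨0, fun _ => a, hs, rfl, fun i => i.elim0, fun _ => hS⟩
    · obtain ⟨n, p, h0, hlast, hmid, hmem⟩ := ih hs
      refine ⟨n + 1, Fin.snoc p a, ?_, ?_, ?_, ?_⟩
      · rw [show (0 : Fin (n + 2)) = (0 : Fin (n + 1)).castSucc from (Fin.castSucc_zero).symm,
          Fin.snoc_castSucc]
        exact h0
      · rw [Fin.snoc_last]
      · intro i
        refine Fin.lastCases ?_ ?_ i
        · rw [Fin.snoc_castSucc, Fin.succ_last, Fin.snoc_last, hlast]
        · intro j
          rw [Fin.snoc_castSucc, Fin.succ_castSucc, Fin.snoc_castSucc]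
          exact hmid j
      · intro i
        refine Fin.lastCases ?_ ?_ i
        · rw [Fin.snoc_last]; exact hS
        · intro j; rw [Fin.snoc_castSucc]; exact hmem j

/-- Let `G` be a finite directed graph with vertices `Fin (l+1)` (vertex `0` the source),
arrows a type `A` with source and target maps `s, t`, and arrow weights
`D a = ε (t a) - ε (s a)` where `ε 0 = 0` and `ε v` is a standard basis vector otherwise.
If `S` is a set of arrows and `v ≠ 0` a vertex with `ε v` in the nonnegative rational span
of `{D a : a ∈ S}`, then `S` contains the arrow set of a directed path from `0` to `v`. -/
theorem stmt_11 (l : ℕ) (A : Type*) [Fintype A] [DecidableEq A]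
    (s t : A → Fin (l + 1))
    (ε : Fin (l + 1) → (Fin (l + 1) → ℚ))
    (hε : ε = fun v => if v = 0 then 0 else Pi.single v 1)
    (v : Fin (l + 1)) (hv : v ≠ 0)
    (S : Finset A)
    (c : A → ℚ) (hc : ∀ a, 0 ≤ c a)
    (hspan : ε v = ∑ a ∈ S, c a • (ε (t a) - ε (s a))) :
    ∃ (n : ℕ) (p : Fin (n + 1) → A),
      s (p 0) = 0 ∧ t (p (Fin.last n)) = v ∧
      (∀ i : Fin n, t (p i.castSucc) = s (p i.succ)) ∧
      (∀ i, p i ∈ S) := by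
  classical
  have hR : Reach s t S 0 v := by
    by_contra hnr
    set T : Finset (Fin (l + 1)) :=
      Finset.univ.filter (fun w => ¬ Reach s t S 0 w) with hT
    have h0T : (0 : Fin (l + 1)) ∉ T := by
      simp only [hT, Finset.mem_filter, Finset.mem_univ, true_and, not_not]
      exact Reach.base
    have hvT : v ∈ T := by
      simp only [hT, Finset.mem_filter, Finset.mem_univ, true_and]
      exact hnr
    have hf : ∀ u, (∑ w ∈ T, ε u w) = if u ∈ T then (1 : ℚ) else 0 := by
      intro u
      by_cases hu : u = 0
      · subst hu; simp [hε, h0T]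
      · have : ∀ w, ε u w = if w = u then (1 : ℚ) else 0 := by
          intro w; rw [hε]; simp [hu, Pi.single_apply]
        simp only [this]
        rw [Finset.sum_ite_eq' T u (fun _ => (1 : ℚ))]
    have h1 : ∑ w ∈ T, ε v w = 1 := by rw [hf v, if_pos hvT]
    have key : (1 : ℚ) =
        ∑ a ∈ S, c a * ((if t a ∈ T then (1 : ℚ) else 0) -
          (if s a ∈ T then (1 : ℚ) else 0)) := by
      calc (1 : ℚ) = ∑ w ∈ T, ε v w := h1.symm
        _ = ∑ w ∈ T, ∑ a ∈ S, c a * (ε (t a) w - ε (s a) w) := by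
            refine Finset.sum_congr rfl fun w _ => ?_
            rw [hspan]
            simp [Finset.sum_apply, smul_eq_mul]
        _ = ∑ a ∈ S, ∑ w ∈ T, c a * (ε (t a) w - ε (s a) w) := Finset.sum_comm
        _ = ∑ a ∈ S, c a * ((∑ w ∈ T, ε (t a) w) - ∑ w ∈ T, ε (s a) w) := by
            refine Finset.sum_congr rfl fun a _ => ?_
            rw [← Finset.mul_sum, Finset.sum_sub_distrib]
        _ = _ := by
            refine Finset.sum_congr rfl fun a _ => ?_
            rw [hf, hf]
    have hle : ∑ a ∈ S, c a * ((if t a ∈ T then (1 : ℚ) else 0) -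
        (if s a ∈ T then (1 : ℚ) else 0)) ≤ 0 := by
      apply Finset.sum_nonpos
      intro a ha
      by_cases hsT : s a ∈ T
      · have h1' : (if t a ∈ T then (1 : ℚ) else 0) ≤ 1 := by split <;> norm_num
        rw [if_pos hsT]
        have := hc a
        nlinarith
      · have hrs : Reach s t S 0 (s a) := by
          by_contra hcon
          exact hsT (by simp only [hT, Finset.mem_filter, Finset.mem_univ, true_and]; exact hcon)
        have hrt : Reach s t S 0 (t a) := Reach.step ha hrs
        have htT : t a ∉ T := by
          simp only [hT, Finset.mem_filter, Finset.mem_univ, true_and, not_not]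
          exact hrt
        rw [if_neg hsT, if_neg htT]
        simp
    linarith
  exact reach_path s t S hR hv
end

section
/- Let $n \ge 2$ and consider the generic $2 \times n$ matrix with entries $x_{ij}$, $i \in \{1,2\}$, $j \in \{1,\dots,n\}$, with lexicographic order induced by $x_{11} > \cdots > x_{1n} > x_{21} > \cdots > x_{2n}$. Let $A \subseteq k[x_{ij}]$ be the subalgebra generated by the $2 \times 2$ minors $p_{ij} = x_{1i} x_{2j} - x_{1j} x_{2i}$ ($i < j$). Then for every nonzero $f \in A$, the lex-leading monomial of $f$ is a product of monomials from the set $\{x_{1i} x_{2j} : i < j\}$; i.e., the minors $p_{ij}$ form a SAGBI basis of $A$. -/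
open MvPolynomial

namespace Sagbi14

variable {k : Type*} [Field k] {n : ℕ}

/-- The `2×2` minor (Plücker coordinate). -/
noncomputable def pl (k : Type*) [Field k] {n : ℕ} (i j : Fin n) :
    MvPolynomial (Lex (Fin 2 × Fin n)) k :=
  X (toLex ((0 : Fin 2), i)) * X (toLex ((1 : Fin 2), j))
    - X (toLex ((0 : Fin 2), j)) * X (toLex ((1 : Fin 2), i))

/-- Diagonal monomial exponent of a column. -/
noncomputable def dg {n : ℕ} (c : Fin n × Fin n) : Lex (Fin 2 × Fin n) →₀ ℕ :=
  Finsupp.single (toLex ((0 : Fin 2), c.1)) 1 + Finsupp.single (toLex ((1 : Fin 2), c.2)) 1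

/-- Product of minors over a multiset of columns. -/
noncomputable def P (k : Type*) [Field k] {n : ℕ} (S : Multiset (Fin n × Fin n)) :
    MvPolynomial (Lex (Fin 2 × Fin n)) k :=
  (S.map fun c => pl k c.1 c.2).prod

/-- Sum of diagonal monomials. -/
noncomputable def Dm {n : ℕ} (S : Multiset (Fin n × Fin n)) : Lex (Fin 2 × Fin n) →₀ ℕ :=
  (S.map dg).sum

/-- Valid multisets of columns: each column strictly increasing. -/
def Valid {n : ℕ} (S : Multiset (Fin n × Fin n)) : Prop := ∀ c ∈ S, c.1 < c.2

/-- Standard (tableau-like) multisets: any two columns comparable in the product order. -/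
def Std {n : ℕ} (S : Multiset (Fin n × Fin n)) : Prop :=
  ∀ c ∈ S, ∀ c' ∈ S, (c.1 ≤ c'.1 ∧ c.2 ≤ c'.2) ∨ (c'.1 ≤ c.1 ∧ c'.2 ≤ c.2)

/-- `f` has leading monomial `d` with leading coefficient `1`. -/
def Lead (f : MvPolynomial (Lex (Fin 2 × Fin n)) k) (d : Lex (Fin 2 × Fin n) →₀ ℕ) : Prop :=
  coeff d f = 1 ∧ ∀ e ∈ f.support, toLex e ≤ toLex d

lemma P_cons (c : Fin n × Fin n) (S : Multiset (Fin n × Fin n)) :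
    P k (c ::ₘ S) = pl k c.1 c.2 * P k S := by
  simp [P]

lemma P_zero : P k (0 : Multiset (Fin n × Fin n)) = 1 := by simp [P]

lemma P_add (S T : Multiset (Fin n × Fin n)) : P k (S + T) = P k S * P k T := by
  simp [P]

lemma Dm_cons (c : Fin n × Fin n) (S : Multiset (Fin n × Fin n)) :
    Dm (c ::ₘ S) = dg c + Dm S := by
  simp [Dm]

lemma Lead_mul {f g : MvPolynomial (Lex (Fin 2 × Fin n)) k} {d e : Lex (Fin 2 × Fin n) →₀ ℕ}
    (hf : Lead f d) (hg : Lead g e) : Lead (f * g) (d + e) := by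
  obtain ⟨hfc, hfs⟩ := hf
  obtain ⟨hgc, hgs⟩ := hg
  constructor
  · rw [coeff_mul]
    rw [Finset.sum_eq_single (d, e)]
    · rw [hfc, hgc, one_mul]
    · rintro ⟨a, b⟩ hab hne
      rw [Finset.HasAntidiagonal.mem_antidiagonal] at hab
      by_contra hC
      have ha : a ∈ f.support := by
        rw [mem_support_iff]; intro h; exact hC (by rw [h, zero_mul])
      have hb : b ∈ g.support := by
        rw [mem_support_iff]; intro h; exact hC (by rw [h, mul_zero])
      have h1 : toLex a ≤ toLex d := hfs a ha
      have h2 : toLex b ≤ toLex e := hgs b hb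
      have had : a = d := by
        by_contra hne'
        have hlt : toLex a < toLex d :=
          lt_of_le_of_ne h1 (fun h => hne' (toLex.injective h))
        have : toLex (a + b) < toLex (d + e) := by
          rw [toLex_add, toLex_add]
          exact add_lt_add_of_lt_of_le hlt h2
        rw [hab] at this
        exact lt_irrefl _ this
      have hbe : b = e := by
        rw [had] at hab; exact add_left_cancel hab
      exact hne (by rw [had, hbe])
    · intro h
      exfalso
      apply h
      rw [Finset.HasAntidiagonal.mem_antidiagonal]
  · intro e' he'
    have h := MvPolynomial.support_mul f g he'
    rw [Finset.mem_add] at h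
    obtain ⟨a, ha, b, hb, rfl⟩ := h
    rw [toLex_add, toLex_add]
    exact add_le_add (hfs a ha) (hgs b hb)

lemma Lead_one : Lead (1 : MvPolynomial (Lex (Fin 2 × Fin n)) k) 0 := by
  constructor
  · exact coeff_zero_one
  · intro e he
    have he0 : e = 0 := by
      by_contra h
      rw [mem_support_iff, coeff_one, if_neg (fun h0 => h h0.symm)] at he
      exact he rfl
    simp [he0]

lemma Lead_pl {i j : Fin n} (hij : i < j) : Lead (pl k i j) (dg (i, j)) := by
  classical
  set u : Lex (Fin 2 × Fin n) →₀ ℕ :=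
    Finsupp.single (toLex ((0 : Fin 2), i)) 1 + Finsupp.single (toLex ((1 : Fin 2), j)) 1 with hu
  set v : Lex (Fin 2 × Fin n) →₀ ℕ :=
    Finsupp.single (toLex ((0 : Fin 2), j)) 1 + Finsupp.single (toLex ((1 : Fin 2), i)) 1 with hv
  have hXX : ∀ a b : Lex (Fin 2 × Fin n),
      (X a * X b : MvPolynomial (Lex (Fin 2 × Fin n)) k)
        = monomial (Finsupp.single a 1 + Finsupp.single b 1) 1 := by
    intro a b
    simp only [MvPolynomial.X]
    rw [monomial_mul, one_mul]
  have hpl : pl k i j = monomial u 1 - monomial v 1 := by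
    rw [pl, hXX, hXX]
  -- key point evaluations
  have h10 : ∀ x : Fin n, toLex ((1 : Fin 2), x) ≠ toLex ((0 : Fin 2), i) := by
    intro x h
    have := toLex.injective h
    simp only [Prod.mk.injEq] at this
    exact absurd this.1 (by decide)
  have h0j : toLex ((0 : Fin 2), j) ≠ toLex ((0 : Fin 2), i) := by
    intro h
    have := toLex.injective h
    simp only [Prod.mk.injEq] at this
    exact absurd this.2 hij.ne'
  have hvu : v (toLex ((0 : Fin 2), i)) = 0 ∧ u (toLex ((0 : Fin 2), i)) = 1 := by
    constructor
    · rw [hv, Finsupp.add_apply, Finsupp.single_eq_of_ne' h0j,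
        Finsupp.single_eq_of_ne' (h10 i), add_zero]
    · rw [hu, Finsupp.add_apply, Finsupp.single_eq_same,
        Finsupp.single_eq_of_ne' (h10 j), add_zero]
  have huv : u ≠ v := by
    intro h
    rw [h] at hvu
    rw [hvu.1] at hvu
    exact one_ne_zero hvu.2.symm
  have hlt : toLex v < toLex u := by
    rw [Finsupp.Lex.lt_iff]
    refine ⟨toLex ((0 : Fin 2), i), ?_, ?_⟩
    · intro y hy
      -- show all four singles vanish at y
      have hkey : ∀ x : Fin n, toLex ((1 : Fin 2), x) ≠ y := by
        intro x h
        rw [← h] at hy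
        rcases Prod.Lex.lt_iff.1 hy with h' | ⟨h', _⟩
        · exact absurd h' (show ¬ ((1 : Fin 2) < (0 : Fin 2)) by decide)
        · exact absurd h' (show ¬ ((1 : Fin 2) = (0 : Fin 2)) by decide)
      have hkey0 : ∀ x : Fin n, i ≤ x → toLex ((0 : Fin 2), x) ≠ y := by
        intro x hx h
        rw [← h] at hy
        rcases Prod.Lex.lt_iff.1 hy with h' | ⟨_, h'⟩
        · exact absurd h' (show ¬ ((0 : Fin 2) < (0 : Fin 2)) by decide)
        · exact absurd h' (not_lt.mpr hx)
      show v y = u y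
      rw [hu, hv, Finsupp.add_apply, Finsupp.add_apply,
        Finsupp.single_eq_of_ne' (hkey0 j hij.le), Finsupp.single_eq_of_ne' (hkey i),
        Finsupp.single_eq_of_ne' (hkey0 i le_rfl), Finsupp.single_eq_of_ne' (hkey j)]
    · show v _ < u _
      rw [hvu.1, hvu.2]
      exact zero_lt_one
  have hdgu : dg ((i, j) : Fin n × Fin n) = u := rfl
  constructor
  · rw [hdgu, hpl, coeff_sub, coeff_monomial, coeff_monomial, if_pos rfl,
      if_neg (fun h : v = u => huv h.symm)]
    simp
  · intro e he
    rw [hpl] at he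
    have h1 : e ∈ (monomial u (1 : k)).support ∪ (monomial v (1 : k)).support :=
      MvPolynomial.support_sub _ _ _ he
    rw [MvPolynomial.support_monomial, MvPolynomial.support_monomial,
      if_neg (one_ne_zero), if_neg (one_ne_zero)] at h1
    rw [hdgu]
    rcases Finset.mem_union.1 h1 with h | h
    · rw [Finset.mem_singleton] at h
      subst h
      exact le_rfl
    · rw [Finset.mem_singleton] at h
      subst h
      exact hlt.le

lemma Lead_P : ∀ S : Multiset (Fin n × Fin n), Valid S → Lead (P k S) (Dm S) := by
  intro S
  induction S using Multiset.induction_on with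
  | empty =>
    intro _
    have h0 : Dm (0 : Multiset (Fin n × Fin n)) = 0 := by simp [Dm]
    rw [P_zero, h0]
    exact Lead_one
  | cons c S ih =>
    intro hv
    rw [P_cons, Dm_cons]
    have hc : c.1 < c.2 := hv c (Multiset.mem_cons_self c S)
    have : Lead (pl k c.1 c.2) (dg c) := by
      have := Lead_pl (k := k) hc
      simpa using this
    exact Lead_mul this (ih fun c' h => hv c' (Multiset.mem_cons_of_mem h))

/-- The straightening (Plücker) relation. -/
lemma plucker (i j l m : Fin n) :
    pl k i j * pl k l m = pl k i m * pl k l j - pl k i l * pl k m j := by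
  simp only [pl]
  ring

lemma Dm_apply_fst (S : Multiset (Fin n × Fin n)) (i : Fin n) :
    Dm S (toLex ((0 : Fin 2), i)) = (S.map Prod.fst).count i := by
  classical
  induction S using Multiset.induction_on with
  | empty => simp [Dm]
  | cons c S ih =>
    rw [Dm_cons, Finsupp.add_apply, ih, Multiset.map_cons, Multiset.count_cons]
    have h1 : dg c (toLex ((0 : Fin 2), i)) = if i = c.1 then 1 else 0 := by
      rw [dg, Finsupp.add_apply]
      have h10 : toLex ((1 : Fin 2), c.2) ≠ toLex ((0 : Fin 2), i) := by
        intro h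
        have := toLex.injective h
        simp only [Prod.mk.injEq] at this
        exact absurd this.1 (by decide)
      rw [Finsupp.single_eq_of_ne' h10, add_zero, Finsupp.single_apply]
      congr 1
      simp only [eq_iff_iff]
      constructor
      · intro h
        have := toLex.injective h
        simp only [Prod.mk.injEq] at this
        exact this.2.symm
      · intro h; rw [h]
    rw [h1]
    ring

lemma Dm_apply_snd (S : Multiset (Fin n × Fin n)) (j : Fin n) :
    Dm S (toLex ((1 : Fin 2), j)) = (S.map Prod.snd).count j := by
  classical
  induction S using Multiset.induction_on with
  | empty => simp [Dm]
  | cons c S ih =>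
    rw [Dm_cons, Finsupp.add_apply, ih, Multiset.map_cons, Multiset.count_cons]
    have h1 : dg c (toLex ((1 : Fin 2), j)) = if j = c.2 then 1 else 0 := by
      rw [dg, Finsupp.add_apply]
      have h01 : toLex ((0 : Fin 2), c.1) ≠ toLex ((1 : Fin 2), j) := by
        intro h
        have := toLex.injective h
        simp only [Prod.mk.injEq] at this
        exact absurd this.1 (by decide)
      rw [Finsupp.single_eq_of_ne' h01, zero_add, Finsupp.single_apply]
      congr 1
      simp only [eq_iff_iff]
      constructor
      · intro h
        have := toLex.injective h
        simp only [Prod.mk.injEq] at this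
        exact this.2.symm
      · intro h; rw [h]
    rw [h1]
    ring

lemma exists_top : ∀ S : Multiset (Fin n × Fin n), S ≠ 0 → Std S →
    ∃ c ∈ S, ∀ c' ∈ S, c'.1 ≤ c.1 ∧ c'.2 ≤ c.2 := by
  intro S
  induction S using Multiset.induction_on with
  | empty => intro h; exact absurd rfl h
  | cons a S ih =>
    intro _ hStd
    by_cases hS0 : S = 0
    · refine ⟨a, Multiset.mem_cons_self a S, ?_⟩
      intro c' hc'
      rw [hS0] at hc'
      simp only [Multiset.cons_zero, Multiset.mem_singleton] at hc'
      subst hc'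
      exact ⟨le_rfl, le_rfl⟩
    · have hStdS : Std S := fun c hc c' hc' =>
        hStd c (Multiset.mem_cons_of_mem hc) c' (Multiset.mem_cons_of_mem hc')
      obtain ⟨c, hcS, hctop⟩ := ih hS0 hStdS
      rcases hStd a (Multiset.mem_cons_self a S) c (Multiset.mem_cons_of_mem hcS)
        with ⟨h1, h2⟩ | ⟨h1, h2⟩
      · refine ⟨c, Multiset.mem_cons_of_mem hcS, ?_⟩
        intro c' hc'
        rcases Multiset.mem_cons.1 hc' with rfl | h
        · exact ⟨h1, h2⟩
        · exact hctop c' h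
      · refine ⟨a, Multiset.mem_cons_self a S, ?_⟩
        intro c' hc'
        rcases Multiset.mem_cons.1 hc' with rfl | h
        · exact ⟨le_rfl, le_rfl⟩
        · exact ⟨(hctop c' h).1.trans h1, (hctop c' h).2.trans h2⟩

lemma Std_erase {S : Multiset (Fin n × Fin n)} (hS : Std S) (c : Fin n × Fin n) :
    Std (S.erase c) := by
  classical
  intro x hx y hy
  exact hS x (Multiset.mem_of_mem_erase hx) y (Multiset.mem_of_mem_erase hy)

lemma map_erase_of_mem {α β : Type*} [DecidableEq α] [DecidableEq β]
    (f : α → β) {S : Multiset α} {c : α} (hc : c ∈ S) :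
    (S.erase c).map f = (S.map f).erase (f c) := by
  have h : S.map f = f c ::ₘ (S.erase c).map f := by
    conv_lhs => rw [← Multiset.cons_erase hc]
    rw [Multiset.map_cons]
  rw [h, Multiset.erase_cons_head]

lemma Std_inj_aux : ∀ (N : ℕ) (S T : Multiset (Fin n × Fin n)), S.card = N →
    Std S → Std T → S.map Prod.fst = T.map Prod.fst → S.map Prod.snd = T.map Prod.snd →
    S = T := by
  classical
  intro N
  induction N with
  | zero =>
    intro S T hcard _ _ hfst _
    have hS : S = 0 := Multiset.card_eq_zero.1 hcard
    subst hS
    simp only [Multiset.map_zero] at hfst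
    exact (Multiset.map_eq_zero.1 hfst.symm).symm
  | succ N ihN =>
    intro S T hcard hSstd hTstd hfst hsnd
    have hS0 : S ≠ 0 := by
      intro h; rw [h] at hcard; simp at hcard
    have hT0 : T ≠ 0 := by
      intro h
      rw [h] at hfst
      simp only [Multiset.map_zero] at hfst
      rw [Multiset.map_eq_zero.1 hfst] at hcard
      simp at hcard
    obtain ⟨c, hcS, hctop⟩ := exists_top S hS0 hSstd
    obtain ⟨c', hc'T, hc'top⟩ := exists_top T hT0 hTstd
    have hcc' : c = c' := by
      have h1 : c.1 ≤ c'.1 := by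
        have : c.1 ∈ T.map Prod.fst := by
          rw [← hfst]; exact Multiset.mem_map_of_mem _ hcS
        obtain ⟨e, heT, he1⟩ := Multiset.mem_map.1 this
        rw [← he1]; exact (hc'top e heT).1
      have h2 : c'.1 ≤ c.1 := by
        have : c'.1 ∈ S.map Prod.fst := by
          rw [hfst]; exact Multiset.mem_map_of_mem _ hc'T
        obtain ⟨e, heS, he1⟩ := Multiset.mem_map.1 this
        rw [← he1]; exact (hctop e heS).1
      have h3 : c.2 ≤ c'.2 := by
        have : c.2 ∈ T.map Prod.snd := by
          rw [← hsnd]; exact Multiset.mem_map_of_mem _ hcS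
        obtain ⟨e, heT, he2⟩ := Multiset.mem_map.1 this
        rw [← he2]; exact (hc'top e heT).2
      have h4 : c'.2 ≤ c.2 := by
        have : c'.2 ∈ S.map Prod.snd := by
          rw [hsnd]; exact Multiset.mem_map_of_mem _ hc'T
        obtain ⟨e, heS, he2⟩ := Multiset.mem_map.1 this
        rw [← he2]; exact (hctop e heS).2
      exact Prod.ext (le_antisymm h1 h2) (le_antisymm h3 h4)
    subst hcc'
    have herase : S.erase c = T.erase c := by
      apply ihN
      · have := Multiset.card_erase_of_mem hcS
        rw [hcard] at this
        simpa using this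
      · exact Std_erase hSstd c
      · exact Std_erase hTstd c
      · rw [map_erase_of_mem _ hcS, map_erase_of_mem _ hc'T, hfst]
      · rw [map_erase_of_mem _ hcS, map_erase_of_mem _ hc'T, hsnd]
    calc S = c ::ₘ S.erase c := (Multiset.cons_erase hcS).symm
    _ = c ::ₘ T.erase c := by rw [herase]
    _ = T := Multiset.cons_erase hc'T

lemma Std_inj {S T : Multiset (Fin n × Fin n)}
    (hSstd : Std S) (hTstd : Std T) (hDm : Dm S = Dm T) : S = T := by
  classical
  apply Std_inj_aux S.card S T rfl hSstd hTstd
  · apply Multiset.ext.2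
    intro i
    rw [← Dm_apply_fst, ← Dm_apply_fst, hDm]
  · apply Multiset.ext.2
    intro j
    rw [← Dm_apply_snd, ← Dm_apply_snd, hDm]

/-- weights measure for termination of straightening -/
def mu {n : ℕ} (S : Multiset (Fin n × Fin n)) : ℕ :=
  (S.map fun c => ((c.2 : ℕ) - (c.1 : ℕ)) ^ 2).sum

lemma mu_cons (c : Fin n × Fin n) (S : Multiset (Fin n × Fin n)) :
    mu (c ::ₘ S) = ((c.2 : ℕ) - (c.1 : ℕ)) ^ 2 + mu S := by
  simp [mu]

lemma sq1 (I K L J : ℕ) (h1 : I < K) (h2 : K < L) (h3 : L < J) :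
    (L - I) ^ 2 + (J - K) ^ 2 < (J - I) ^ 2 + (L - K) ^ 2 := by
  have hA : 1 ≤ K - I := by omega
  have hC : 1 ≤ J - L := by omega
  have e1 : L - I = (K - I) + (L - K) := by omega
  have e2 : J - K = (L - K) + (J - L) := by omega
  have e3 : J - I = (K - I) + (L - K) + (J - L) := by omega
  rw [e1, e2, e3]
  nlinarith [hA, hC]

lemma sq2 (I K L J : ℕ) (h1 : I < K) (h2 : K < L) (h3 : L < J) :
    (K - I) ^ 2 + (J - L) ^ 2 < (J - I) ^ 2 + (L - K) ^ 2 := by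
  have hB : 1 ≤ L - K := by omega
  have e3 : J - I = (K - I) + (L - K) + (J - L) := by omega
  rw [e3]
  nlinarith [hB]

/-- the set of standard products -/
def stdSet (k : Type*) [Field k] (n : ℕ) : Set (MvPolynomial (Lex (Fin 2 × Fin n)) k) :=
  {f | ∃ S : Multiset (Fin n × Fin n), Valid S ∧ Std S ∧ f = P k S}

lemma nonstd_decomp {S : Multiset (Fin n × Fin n)} (hval : Valid S) (hstd : ¬ Std S) :
    ∃ S1 S2 : Multiset (Fin n × Fin n), Valid S1 ∧ Valid S2 ∧ mu S1 < mu S ∧ mu S2 < mu S ∧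
      (P k S : MvPolynomial (Lex (Fin 2 × Fin n)) k) = P k S1 - P k S2 := by
  classical
  rw [Std] at hstd
  push_neg at hstd
  obtain ⟨c, hcS, c', hc'S, h1, h2⟩ := hstd
  -- find nested pair a b : a ∈ S, b ∈ S.erase a, a.1 < b.1, b.2 < a.2
  have hnested : ∃ a b : Fin n × Fin n, a ∈ S ∧ b ∈ S.erase a ∧ a.1 < b.1 ∧ b.2 < a.2 := by
    rcases lt_trichotomy c.1 c'.1 with h | h | h
    · refine ⟨c, c', hcS, ?_, h, h1 h.le⟩
      exact (Multiset.mem_erase_of_ne (fun he => h.ne' (congrArg Prod.fst he))).2 hc'S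
    · exact absurd (h2 h.ge) (not_lt.2 (h1 h.le).le)
    · refine ⟨c', c, hc'S, ?_, h, h2 h.le⟩
      exact (Multiset.mem_erase_of_ne (fun he => h.ne' (congrArg Prod.fst he))).2 hcS
  obtain ⟨a, b, haS, hbS, hab1, hab2⟩ := hnested
  set S₂ := (S.erase a).erase b with hS₂
  have hSeq : S = a ::ₘ b ::ₘ S₂ := by
    rw [hS₂, Multiset.cons_erase hbS, Multiset.cons_erase haS]
  have hva : a.1 < a.2 := hval a haS
  have hvb : b.1 < b.2 := hval b (Multiset.mem_of_mem_erase hbS)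
  -- chain a.1 < b.1 < b.2 < a.2
  have hchain1 : a.1 < b.1 := hab1
  have hchain2 : b.1 < b.2 := hvb
  have hchain3 : b.2 < a.2 := hab2
  have hvS₂ : Valid S₂ := fun x hx =>
    hval x (Multiset.mem_of_mem_erase (Multiset.mem_of_mem_erase hx))
  refine ⟨(a.1, b.2) ::ₘ (b.1, a.2) ::ₘ S₂, (a.1, b.1) ::ₘ (b.2, a.2) ::ₘ S₂, ?_, ?_, ?_, ?_, ?_⟩
  · intro x hx
    rcases Multiset.mem_cons.1 hx with rfl | hx
    · exact hchain1.trans hchain2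
    rcases Multiset.mem_cons.1 hx with rfl | hx
    · exact hchain2.trans hchain3
    · exact hvS₂ x hx
  · intro x hx
    rcases Multiset.mem_cons.1 hx with rfl | hx
    · exact hchain1
    rcases Multiset.mem_cons.1 hx with rfl | hx
    · exact hchain3
    · exact hvS₂ x hx
  · rw [hSeq, mu_cons, mu_cons, mu_cons, mu_cons]
    dsimp only
    have := sq1 (a.1 : ℕ) (b.1 : ℕ) (b.2 : ℕ) (a.2 : ℕ) hchain1 hchain2 hchain3
    omega
  · rw [hSeq, mu_cons, mu_cons, mu_cons, mu_cons]
    dsimp only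
    have := sq2 (a.1 : ℕ) (b.1 : ℕ) (b.2 : ℕ) (a.2 : ℕ) hchain1 hchain2 hchain3
    omega
  · rw [hSeq, P_cons, P_cons, P_cons, P_cons, P_cons, P_cons]
    rw [← mul_assoc, ← mul_assoc, ← mul_assoc, ← sub_mul]
    congr 1
    exact plucker a.1 a.2 b.1 b.2

lemma straighten : ∀ (N : ℕ) (S : Multiset (Fin n × Fin n)), mu S ≤ N → Valid S →
    (P k S : MvPolynomial (Lex (Fin 2 × Fin n)) k) ∈ Submodule.span k (stdSet k n) := by
  intro N
  induction N using Nat.strong_induction_on with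
  | _ N ih =>
    intro S hmu hval
    by_cases hstd : Std S
    · exact Submodule.subset_span ⟨S, hval, hstd, rfl⟩
    · obtain ⟨S1, S2, hv1, hv2, hm1, hm2, heq⟩ := nonstd_decomp (k := k) hval hstd
      rw [heq]
      exact Submodule.sub_mem _
        (ih (mu S1) (lt_of_lt_of_le hm1 hmu) S1 le_rfl hv1)
        (ih (mu S2) (lt_of_lt_of_le hm2 hmu) S2 le_rfl hv2)

end Sagbi14

open Sagbi14 in
/-- SAGBI property for the `2 × 2` minors of the generic `2 × n` matrix (`Gr(n,2)`):
for every nonzero element `f` of the subalgebra generated by the minors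
`p i j = x 1 i * x 2 j - x 1 j * x 2 i` (`i < j`), the lex-leading monomial of `f`
(with respect to `x 1 1 > ⋯ > x 1 n > x 2 1 > ⋯ > x 2 n`) is a product of the
diagonal monomials `x 1 i * x 2 j` with `i < j`. -/
theorem stmt_14 {k : Type*} [Field k] (n : ℕ) (hn : 2 ≤ n)
    (A : Subalgebra k (MvPolynomial (Lex (Fin 2 × Fin n)) k))
    (hA : A = Algebra.adjoin k
      {g | ∃ i j : Fin n, i < j ∧
        g = X (toLex ((0 : Fin 2), i)) * X (toLex ((1 : Fin 2), j))
          - X (toLex ((0 : Fin 2), j)) * X (toLex ((1 : Fin 2), i))}) :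
    ∀ f ∈ A, f ≠ 0 → ∀ d ∈ f.support, (∀ e ∈ f.support, toLex e ≤ toLex d) →
      ∃ S : Multiset (Fin n × Fin n), (∀ p ∈ S, p.1 < p.2) ∧
        d = (S.map fun p => Finsupp.single (toLex ((0 : Fin 2), p.1)) 1
          + Finsupp.single (toLex ((1 : Fin 2), p.2)) 1).sum := by
  classical
  intro f hf hf0 d hd hdmax
  set G : Set (MvPolynomial (Lex (Fin 2 × Fin n)) k) :=
    {g | ∃ i j : Fin n, i < j ∧
      g = X (toLex ((0 : Fin 2), i)) * X (toLex ((1 : Fin 2), j))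
        - X (toLex ((0 : Fin 2), j)) * X (toLex ((1 : Fin 2), i))} with hG
  have hfspan : f ∈ Submodule.span k (stdSet k n) := by
    set M : Submonoid (MvPolynomial (Lex (Fin 2 × Fin n)) k) :=
      { carrier := {g | ∃ S : Multiset (Fin n × Fin n), Valid S ∧ g = P k S}
        one_mem' := ⟨0, fun c hc => absurd hc (Multiset.notMem_zero c), P_zero.symm⟩
        mul_mem' := by
          rintro x y ⟨S, hS, rfl⟩ ⟨T, hT, rfl⟩
          exact ⟨S + T, fun c hc => (Multiset.mem_add.1 hc).elim (hS c) (hT c),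
            (P_add S T).symm⟩ } with hM
    have hgen : G ⊆ (M : Set _) := by
      rintro g ⟨i, j, hij, rfl⟩
      refine ⟨{(i, j)}, ?_, ?_⟩
      · intro c hc
        rw [Multiset.mem_singleton] at hc
        subst hc
        exact hij
      · simp [P, pl]
    have h1 : f ∈ Submodule.span k (Submonoid.closure G : Set _) := by
      have h0 : f ∈ Subalgebra.toSubmodule (Algebra.adjoin k G) := by
        rw [Subalgebra.mem_toSubmodule]
        rw [hA] at hf
        exact hf
      rwa [Algebra.adjoin_eq_span] at h0
    have h2 : f ∈ Submodule.span k (M : Set _) :=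
      Submodule.span_mono (Submonoid.closure_le.2 hgen) h1
    refine Submodule.span_le.2 ?_ h2
    rintro g ⟨S, hS, rfl⟩
    exact straighten (mu S) S le_rfl hS
  obtain ⟨c, hcsupp, hsum⟩ := Submodule.mem_span_set.mp hfspan
  have hex : ∀ g ∈ stdSet k n,
      ∃ S : Multiset (Fin n × Fin n), Valid S ∧ Std S ∧ g = P k S := fun g hg => hg
  choose! SS hV hStd hP using hex
  have hstd_of : ∀ g ∈ c.support, g ∈ stdSet k n := fun g hg => hcsupp hg
  have ht : c.support.Nonempty := by
    rcases Finset.eq_empty_or_nonempty c.support with h | h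
    · exfalso
      apply hf0
      rw [← hsum, Finsupp.support_eq_empty.1 h]
      simp
    · exact h
  obtain ⟨g0, hg0, hmax⟩ := Finset.exists_max_image c.support (fun g => toLex (Dm (SS g))) ht
  set m := Dm (SS g0) with hm
  have hleadg : ∀ g ∈ c.support, Lead g (Dm (SS g)) := by
    intro g hg
    have hLP := Lead_P (k := k) (SS g) (hV g (hstd_of g hg))
    rw [← hP g (hstd_of g hg)] at hLP
    exact hLP
  have hcoef : coeff m f = c g0 := by
    rw [← hsum, Finsupp.sum, coeff_sum]
    rw [Finset.sum_eq_single g0]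
    · rw [coeff_smul, (hleadg g0 hg0).1, smul_eq_mul, mul_one]
    · intro g hg hne
      rw [coeff_smul]
      have hzero : coeff m g = 0 := by
        by_contra hC
        have hmem : m ∈ g.support := mem_support_iff.2 hC
        have hle1 : toLex m ≤ toLex (Dm (SS g)) := (hleadg g hg).2 m hmem
        have hle2 : toLex (Dm (SS g)) ≤ toLex m := hmax g hg
        have h3 : Dm (SS g) = Dm (SS g0) := toLex.injective (le_antisymm hle2 hle1)
        have h4 : SS g = SS g0 :=
          Std_inj (hStd g (hstd_of g hg)) (hStd g0 (hstd_of g0 hg0)) h3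
        apply hne
        rw [hP g (hstd_of g hg), hP g0 (hstd_of g0 hg0), h4]
      rw [hzero, smul_zero]
    · intro h
      exact absurd hg0 h
  have hmsupp : m ∈ f.support := by
    rw [mem_support_iff, hcoef]
    exact Finsupp.mem_support_iff.1 hg0
  have hd_le : toLex d ≤ toLex m := by
    have hdg : ∃ g ∈ c.support, coeff d g ≠ 0 := by
      by_contra hC
      push_neg at hC
      have hcd : coeff d f = 0 := by
        rw [← hsum, Finsupp.sum, coeff_sum]
        apply Finset.sum_eq_zero
        intro g hg
        rw [coeff_smul, hC g hg, smul_zero]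
      exact (mem_support_iff.1 hd) hcd
    obtain ⟨g1, hg1, hdg1⟩ := hdg
    exact le_trans ((hleadg g1 hg1).2 d (mem_support_iff.2 hdg1)) (hmax g1 hg1)
  have hm_le : toLex m ≤ toLex d := hdmax m hmsupp
  have hdm : d = m := toLex.injective (le_antisymm hd_le hm_le)
  refine ⟨SS g0, hV g0 (hstd_of g0 hg0), ?_⟩
  rw [hdm, hm]
  rfl
end
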